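/- Let q ≡ 1 (mod 4) be a prime power and let P_q be the Paley graph on 𝔽_q. The number of subsets V₁ ⊆ 𝔽_q such that both induced subgraphs P_q[V₁] and P_q[𝔽_q \ V₁] have all degrees even equals 2^{(q+1)/2} if q ≡ 1 (mod 8), and equals 2 if q ≡ 5 (mod 8). -/

import Mathlib

open Finset

set_option linter.unusedSectionVars false

section PaleyAux
variable {F : Type*} [Field F] [Fintype F] [DecidableEq F]

/-- nonzero squares -/
def Qs (F : Type*) [Field F] [Fintype F] [DecidableEq F] : Finset F :=
  univ.filter fun s => quadraticChar F s = 1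

/-- nonsquares -/
def Ns (F : Type*) [Field F] [Fintype F] [DecidableEq F] : Finset F :=
  univ.filter fun s => quadraticChar F s = -1

lemma mem_Qs {s : F} : s ∈ Qs F ↔ quadraticChar F s = 1 := by simp [Qs]
lemma mem_Ns {s : F} : s ∈ Ns F ↔ quadraticChar F s = -1 := by simp [Ns]

variable (hq : Fintype.card F % 4 = 1)
include hq

lemma ringChar_ne_two' : ringChar F ≠ 2 := by
  intro h
  have := FiniteField.even_card_of_char_two h
  omega

lemma chi_neg_one : quadraticChar F (-1) = 1 := by
  rw [quadraticChar_neg_one (ringChar_ne_two' hq)]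
  exact ZMod.χ₄_nat_one_mod_four hq

lemma sum_chi : ∑ x : F, quadraticChar F x = 0 := quadraticChar_sum_zero (ringChar_ne_two' hq)

lemma cardQs_add_cardNs : (Qs F).card + (Ns F).card + 1 = Fintype.card F := by
  have hd : Disjoint (Qs F) (Ns F) := by
    rw [Finset.disjoint_left]; intro a ha hb
    rw [mem_Qs] at ha; rw [mem_Ns, ha] at hb; norm_num at hb
  have hu : Qs F ∪ Ns F = univ \ {0} := by
    ext s
    simp only [mem_union, mem_Qs, mem_Ns, mem_sdiff, mem_univ, true_and, mem_singleton]
    constructor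
    · rintro (h | h) rfl <;> rw [quadraticChar_zero] at h <;> norm_num at h
    · intro hs; exact quadraticChar_dichotomy hs
  have hc := Finset.card_union_of_disjoint hd
  rw [hu, Finset.card_sdiff_of_subset (by simp)] at hc
  simp only [Finset.card_univ, Finset.card_singleton] at hc
  have hpos : 0 < Fintype.card F := Fintype.card_pos
  omega

lemma cardQs_eq_cardNs : (Qs F).card = (Ns F).card := by
  have h := sum_chi hq
  rw [← Finset.sum_filter_add_sum_filter_not univ (fun s => quadraticChar F s = 1)] at h
  have h1 : ∑ x ∈ univ.filter (fun s => quadraticChar F s = 1), quadraticChar F x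
      = ((Qs F).card : ℤ) := by
    rw [Finset.sum_congr rfl (fun x hx => (Finset.mem_filter.mp hx).2)]
    simp [Qs]
  have h2 : univ.filter (fun s => ¬ quadraticChar F s = 1) = insert (0 : F) (Ns F) := by
    ext s
    simp only [Finset.mem_filter, mem_univ, true_and, Finset.mem_insert, mem_Ns]
    constructor
    · intro hs
      by_cases h0 : s = 0
      · exact Or.inl h0
      · exact Or.inr ((quadraticChar_dichotomy h0).resolve_left hs)
    · rintro (rfl | hs)
      · rw [quadraticChar_zero]; norm_num
      · rw [hs]; norm_num
  have h3 : ∑ x ∈ insert (0 : F) (Ns F), quadraticChar F x = -((Ns F).card : ℤ) := by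
    rw [Finset.sum_insert (by simp [mem_Ns, quadraticChar_zero])]
    rw [Finset.sum_congr rfl (fun x hx => mem_Ns.mp hx)]
    simp [quadraticChar_zero]
  rw [h1, h2, h3] at h
  omega

lemma cardQs : 2 * (Qs F).card = Fintype.card F - 1 := by
  have h1 := cardQs_add_cardNs hq
  have h2 := cardQs_eq_cardNs hq
  omega

lemma jacobi_chi (u : F) (hu : u ≠ 0) :
    ∑ x : F, quadraticChar F x * quadraticChar F (u - x) = -1 := by
  have hχ2 := ringChar_ne_two' hq
  have hJ : jacobiSum (quadraticChar F) (quadraticChar F) = -1 := by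
    have h := jacobiSum_nontrivial_inv (quadraticChar_ne_one hχ2)
    rw [(quadraticChar_isQuadratic F).inv] at h
    rw [h, chi_neg_one hq]
  have hre : ∑ x : F, quadraticChar F x * quadraticChar F (u - x)
      = ∑ y : F, quadraticChar F (u * y) * quadraticChar F (u - u * y) := by
    exact (Equiv.sum_comp (Equiv.mulLeft₀ u hu)
      (fun x => quadraticChar F x * quadraticChar F (u - x))).symm
  rw [hre, ← hJ]
  unfold jacobiSum
  apply Finset.sum_congr rfl
  intro y _
  have : u - u * y = u * (1 - y) := by ring
  rw [this, map_mul, map_mul]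
  have hsq : quadraticChar F u * quadraticChar F u = 1 := by
    have := quadraticChar_sq_one hu
    rwa [pow_two] at this
  linear_combination (quadraticChar F y * quadraticChar F (1 - y)) * hsq

lemma sum_chi_shift (u : F) : ∑ x : F, quadraticChar F (u - x) = 0 := by
  have h := Equiv.sum_comp (Equiv.subLeft u) (quadraticChar F)
  simp only [Equiv.subLeft_apply] at h
  rw [h]; exact sum_chi hq

omit hq in
lemma filter_mem_card (p : F → Prop) [DecidablePred p] (s : Finset F) :
    univ.filter (fun x => x ∈ s ∧ p x) = s.filter p := by
  ext x; simp [Finset.mem_filter]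

lemma cardQQ (u : F) (hu : u ≠ 0) :
    (4 * (((Qs F).filter fun s => u - s ∈ Qs F).card : ℤ))
      = Fintype.card F - 3 - 2 * quadraticChar F u := by
  have key : ∀ x : F,
      (4 : ℤ) * (if x ∈ Qs F ∧ u - x ∈ Qs F then 1 else 0)
        = (1 + quadraticChar F x) * (1 + quadraticChar F (u - x))
          - (if x = 0 then 1 + quadraticChar F u else 0)
          - (if x = u then 1 + quadraticChar F u else 0) := by
    intro x
    by_cases h0 : x = 0
    · subst h0
      have : ¬ ((0:F) ∈ Qs F ∧ u - 0 ∈ Qs F) := by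
        rintro ⟨h, -⟩; rw [mem_Qs, quadraticChar_zero] at h; norm_num at h
      rw [if_neg this, if_pos rfl, if_neg (fun h => hu h.symm)]
      rw [quadraticChar_zero, sub_zero]; ring
    · by_cases h1 : x = u
      · subst h1
        have : ¬ (x ∈ Qs F ∧ x - x ∈ Qs F) := by
          rintro ⟨-, h⟩; rw [sub_self, mem_Qs, quadraticChar_zero] at h; norm_num at h
        rw [if_neg this, if_neg h0, if_pos rfl, sub_self, quadraticChar_zero]; ring
      · have hux : u - x ≠ 0 := sub_ne_zero_of_ne (Ne.symm h1)
        rw [if_neg h0, if_neg h1]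
        rcases quadraticChar_dichotomy h0 with h | h <;>
          rcases quadraticChar_dichotomy hux with h' | h' <;>
          simp only [mem_Qs, h, h'] <;> norm_num
  have hsum : ∑ x : F, ((4 : ℤ) * (if x ∈ Qs F ∧ u - x ∈ Qs F then 1 else 0))
      = ∑ x : F, ((1 + quadraticChar F x) * (1 + quadraticChar F (u - x))
          - (if x = 0 then 1 + quadraticChar F u else 0)
          - (if x = u then 1 + quadraticChar F u else 0)) :=
    Finset.sum_congr rfl (fun x _ => key x)
  rw [← Finset.mul_sum, Finset.sum_boole, filter_mem_card] at hsum
  have hexp : ∑ x : F, ((1 + quadraticChar F x) * (1 + quadraticChar F (u - x))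
          - (if x = 0 then 1 + quadraticChar F u else 0)
          - (if x = u then 1 + quadraticChar F u else 0))
      = (Fintype.card F : ℤ) - 1 - 2 * (1 + quadraticChar F u) := by
    rw [Finset.sum_sub_distrib, Finset.sum_sub_distrib]
    have e1 : ∑ x : F, (1 + quadraticChar F x) * (1 + quadraticChar F (u - x))
        = (Fintype.card F : ℤ) - 1 := by
      have : ∀ x : F, (1 + quadraticChar F x) * (1 + quadraticChar F (u - x))
          = 1 + quadraticChar F x + quadraticChar F (u - x)
            + quadraticChar F x * quadraticChar F (u - x) := fun x => by ring
      rw [Finset.sum_congr rfl (fun x _ => this x)]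
      rw [Finset.sum_add_distrib, Finset.sum_add_distrib, Finset.sum_add_distrib]
      rw [sum_chi hq, sum_chi_shift hq, jacobi_chi hq u hu]
      simp only [Finset.sum_const, Finset.card_univ, nsmul_eq_mul, mul_one]
      ring
    have e2 : ∑ x : F, (if x = 0 then 1 + quadraticChar F u else (0:ℤ))
        = 1 + quadraticChar F u := by
      rw [Finset.sum_ite_eq' univ (0:F) (fun _ => 1 + quadraticChar F u)]
      simp
    have e3 : ∑ x : F, (if x = u then 1 + quadraticChar F u else (0:ℤ))
        = 1 + quadraticChar F u := by
      rw [Finset.sum_ite_eq' univ u (fun _ => 1 + quadraticChar F u)]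
      simp
    rw [e1, e2, e3]; ring
  rw [hexp] at hsum
  rw [hsum]; ring

lemma cardQN (u : F) (hu : u ≠ 0) :
    (4 * (((Qs F).filter fun s => u - s ∈ Ns F).card : ℤ)) = Fintype.card F - 1 := by
  have key : ∀ x : F,
      (4 : ℤ) * (if x ∈ Qs F ∧ u - x ∈ Ns F then 1 else 0)
        = (1 + quadraticChar F x) * (1 - quadraticChar F (u - x))
          - (if x = 0 then 1 - quadraticChar F u else 0)
          - (if x = u then 1 + quadraticChar F u else 0) := by
    intro x
    by_cases h0 : x = 0
    · subst h0
      have : ¬ ((0:F) ∈ Qs F ∧ u - 0 ∈ Ns F) := by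
        rintro ⟨h, -⟩; rw [mem_Qs, quadraticChar_zero] at h; norm_num at h
      rw [if_neg this, if_pos rfl, if_neg (fun h => hu h.symm)]
      rw [quadraticChar_zero, sub_zero]; ring
    · by_cases h1 : x = u
      · subst h1
        have : ¬ (x ∈ Qs F ∧ x - x ∈ Ns F) := by
          rintro ⟨-, h⟩; rw [sub_self, mem_Ns, quadraticChar_zero] at h; norm_num at h
        rw [if_neg this, if_neg h0, if_pos rfl, sub_self, quadraticChar_zero]; ring
      · have hux : u - x ≠ 0 := sub_ne_zero_of_ne (Ne.symm h1)
        rw [if_neg h0, if_neg h1]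
        rcases quadraticChar_dichotomy h0 with h | h <;>
          rcases quadraticChar_dichotomy hux with h' | h' <;>
          simp only [mem_Qs, mem_Ns, h, h'] <;> norm_num
  have hsum : ∑ x : F, ((4 : ℤ) * (if x ∈ Qs F ∧ u - x ∈ Ns F then 1 else 0))
      = ∑ x : F, ((1 + quadraticChar F x) * (1 - quadraticChar F (u - x))
          - (if x = 0 then 1 - quadraticChar F u else 0)
          - (if x = u then 1 + quadraticChar F u else 0)) :=
    Finset.sum_congr rfl (fun x _ => key x)
  rw [← Finset.mul_sum, Finset.sum_boole, filter_mem_card] at hsum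
  have hexp : ∑ x : F, ((1 + quadraticChar F x) * (1 - quadraticChar F (u - x))
          - (if x = 0 then 1 - quadraticChar F u else 0)
          - (if x = u then 1 + quadraticChar F u else 0))
      = (Fintype.card F : ℤ) - 1 := by
    rw [Finset.sum_sub_distrib, Finset.sum_sub_distrib]
    have e1 : ∑ x : F, (1 + quadraticChar F x) * (1 - quadraticChar F (u - x))
        = (Fintype.card F : ℤ) + 1 := by
      have : ∀ x : F, (1 + quadraticChar F x) * (1 - quadraticChar F (u - x))
          = 1 + quadraticChar F x - quadraticChar F (u - x)
            - quadraticChar F x * quadraticChar F (u - x) := fun x => by ring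
      rw [Finset.sum_congr rfl (fun x _ => this x)]
      rw [Finset.sum_sub_distrib, Finset.sum_sub_distrib, Finset.sum_add_distrib]
      rw [sum_chi hq, sum_chi_shift hq, jacobi_chi hq u hu]
      simp only [Finset.sum_const, Finset.card_univ, nsmul_eq_mul, mul_one]
      ring
    have e2 : ∑ x : F, (if x = 0 then 1 - quadraticChar F u else (0:ℤ))
        = 1 - quadraticChar F u := by
      rw [Finset.sum_ite_eq' univ (0:F) (fun _ => 1 - quadraticChar F u)]
      simp
    have e3 : ∑ x : F, (if x = u then 1 + quadraticChar F u else (0:ℤ))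
        = 1 + quadraticChar F u := by
      rw [Finset.sum_ite_eq' univ u (fun _ => 1 + quadraticChar F u)]
      simp
    rw [e1, e2, e3]; ring
  rw [hexp] at hsum
  rw [hsum]

end PaleyAux

section Ops
open Finset
variable {F : Type*} [Field F] [Fintype F] [DecidableEq F]

lemma zmod2_cases (c : ZMod 2) : c = 0 ∨ c = 1 := by revert c; decide

lemma natCast_zmod2_zero {n : ℕ} (h : n % 2 = 0) : (n : ZMod 2) = 0 := by
  rw [← ZMod.natCast_mod n 2, h, Nat.cast_zero]

lemma natCast_zmod2_one {n : ℕ} (h : n % 2 = 1) : (n : ZMod 2) = 1 := by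
  rw [← ZMod.natCast_mod n 2, h, Nat.cast_one]

/-- convolution operator by the indicator of the nonzero squares -/
def TQ : (F → ZMod 2) →+ (F → ZMod 2) where
  toFun x := fun v => ∑ s ∈ Qs F, x (v + s)
  map_zero' := by funext v; simp
  map_add' x y := by funext v; simp [Finset.sum_add_distrib]

/-- convolution operator by the indicator of the nonsquares -/
def TN : (F → ZMod 2) →+ (F → ZMod 2) where
  toFun x := fun v => ∑ s ∈ Ns F, x (v + s)
  map_zero' := by funext v; simp
  map_add' x y := by funext v; simp [Finset.sum_add_distrib]

/-- augmentation -/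
def ES : (F → ZMod 2) →+ ZMod 2 where
  toFun x := ∑ v, x v
  map_zero' := by simp
  map_add' x y := by simp [Finset.sum_add_distrib]

lemma TQ_apply (x : F → ZMod 2) (v : F) : TQ x v = ∑ s ∈ Qs F, x (v + s) := rfl
lemma TN_apply (x : F → ZMod 2) (v : F) : TN x v = ∑ s ∈ Ns F, x (v + s) := rfl
lemma ES_apply (x : F → ZMod 2) : ES x = ∑ v, x v := rfl

lemma double_sum_eq (P R : Finset F) (x : F → ZMod 2) (v : F) :
    ∑ s ∈ P, ∑ t ∈ R, x (v + s + t)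
      = ∑ u : F, (((P ×ˢ R).filter fun p => p.1 + p.2 = u).card : ZMod 2) * x (v + u) := by
  rw [← Finset.sum_product']
  rw [← Finset.sum_fiberwise_of_maps_to (g := fun p : F × F => p.1 + p.2)
    (fun p _ => mem_univ _) (fun p => x (v + p.1 + p.2))]
  apply Finset.sum_congr rfl
  intro u _
  have h1 : ∀ p ∈ (P ×ˢ R).filter (fun p : F × F => p.1 + p.2 = u),
      x (v + p.1 + p.2) = x (v + u) := by
    intro p hp
    rw [add_assoc, (Finset.mem_filter.mp hp).2]
  rw [Finset.sum_congr rfl h1, Finset.sum_const, nsmul_eq_mul]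

lemma cardPair (P R : Finset F) (u : F) :
    ((P ×ˢ R).filter fun p => p.1 + p.2 = u).card = (P.filter fun s => u - s ∈ R).card := by
  apply Finset.card_nbij' (fun p => p.1) (fun s => (s, u - s))
  · intro p hp
    rw [Finset.mem_coe, Finset.mem_filter, Finset.mem_product] at hp
    rw [Finset.mem_coe, Finset.mem_filter]
    refine ⟨hp.1.1, ?_⟩
    have : p.2 = u - p.1 := eq_sub_of_add_eq' hp.2
    rw [← this]; exact hp.1.2
  · intro s hs
    rw [Finset.mem_coe, Finset.mem_filter] at hs
    rw [Finset.mem_coe, Finset.mem_filter, Finset.mem_product]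
    exact ⟨⟨hs.1, hs.2⟩, by ring⟩
  · intro p hp
    rw [Finset.mem_coe, Finset.mem_filter, Finset.mem_product] at hp
    exact Prod.ext rfl (eq_sub_of_add_eq' hp.2).symm
  · intro s _; rfl

end Ops

section Coeffs
open Finset
variable {F : Type*} [Field F] [Fintype F] [DecidableEq F]

lemma zero_not_mem_Qs : (0 : F) ∉ Qs F := by simp [mem_Qs, quadraticChar_zero]
lemma zero_not_mem_Ns : (0 : F) ∉ Ns F := by simp [mem_Ns, quadraticChar_zero]

lemma QsNs_disjoint : Disjoint (Qs F) (Ns F) := by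
  rw [Finset.disjoint_left]; intro a ha hb
  rw [mem_Qs] at ha; rw [mem_Ns, ha] at hb; norm_num at hb

lemma QsNs_union : Qs F ∪ Ns F = univ \ {0} := by
  ext s
  simp only [mem_union, mem_Qs, mem_Ns, mem_sdiff, mem_univ, true_and, mem_singleton]
  constructor
  · rintro (h | h) rfl <;> rw [quadraticChar_zero] at h <;> norm_num at h
  · intro hs; exact quadraticChar_dichotomy hs

variable (hq : Fintype.card F % 4 = 1)
include hq

lemma cardQs_even : (Qs F).card % 2 = 0 := by
  have h := cardQs hq
  have : 0 < Fintype.card F := Fintype.card_pos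
  omega

lemma cardNs_even : (Ns F).card % 2 = 0 := by
  have h := cardQs_eq_cardNs hq
  have := cardQs_even hq
  omega

lemma neg_mem_Qs {s : F} (hs : s ∈ Qs F) : -s ∈ Qs F := by
  rw [mem_Qs] at hs ⊢
  rw [show -s = -1 * s by ring, map_mul, chi_neg_one hq, hs, one_mul]

lemma coeffQQ_one (h8 : Fintype.card F % 8 = 1) (u : F) :
    ((((Qs F) ×ˢ (Qs F)).filter fun p => p.1 + p.2 = u).card : ZMod 2)
      = if u ∈ Qs F then 1 else 0 := by
  rw [cardPair]
  by_cases h0 : u = 0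
  · subst h0
    have he : (Qs F).filter (fun s => (0:F) - s ∈ Qs F) = Qs F := by
      rw [Finset.filter_eq_self]
      intro s hs; rw [zero_sub]; exact neg_mem_Qs hq hs
    rw [he, if_neg zero_not_mem_Qs]
    exact natCast_zmod2_zero (cardQs_even hq)
  · have hZ := cardQQ hq u h0
    by_cases hu : u ∈ Qs F
    · rw [if_pos hu]
      rw [mem_Qs] at hu
      rw [hu] at hZ
      apply natCast_zmod2_one
      omega
    · rw [if_neg hu]
      have hm : quadraticChar F u = -1 :=
        (quadraticChar_dichotomy h0).resolve_left (fun h => hu (mem_Qs.mpr h))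
      rw [hm] at hZ
      apply natCast_zmod2_zero
      omega

lemma coeffQN_one (h8 : Fintype.card F % 8 = 1) (u : F) :
    ((((Qs F) ×ˢ (Ns F)).filter fun p => p.1 + p.2 = u).card : ZMod 2) = 0 := by
  rw [cardPair]
  by_cases h0 : u = 0
  · subst h0
    have he : (Qs F).filter (fun s => (0:F) - s ∈ Ns F) = ∅ := by
      rw [Finset.filter_eq_empty_iff]
      intro s hs h
      have := neg_mem_Qs hq hs
      rw [zero_sub] at h
      exact Finset.disjoint_left.mp QsNs_disjoint this h
    rw [he]
    simp
  · have hZ := cardQN hq u h0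
    apply natCast_zmod2_zero
    omega

lemma coeffQQ_five (h5 : Fintype.card F % 8 = 5) (u : F) :
    ((((Qs F) ×ˢ (Qs F)).filter fun p => p.1 + p.2 = u).card : ZMod 2)
      = if u ∈ Ns F then 1 else 0 := by
  rw [cardPair]
  by_cases h0 : u = 0
  · subst h0
    have he : (Qs F).filter (fun s => (0:F) - s ∈ Qs F) = Qs F := by
      rw [Finset.filter_eq_self]
      intro s hs; rw [zero_sub]; exact neg_mem_Qs hq hs
    rw [he, if_neg zero_not_mem_Ns]
    exact natCast_zmod2_zero (cardQs_even hq)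
  · have hZ := cardQQ hq u h0
    by_cases hu : u ∈ Ns F
    · rw [if_pos hu]
      rw [mem_Ns] at hu
      rw [hu] at hZ
      apply natCast_zmod2_one
      omega
    · rw [if_neg hu]
      have hm : quadraticChar F u = 1 :=
        (quadraticChar_dichotomy h0).resolve_right (fun h => hu (mem_Ns.mpr h))
      rw [hm] at hZ
      apply natCast_zmod2_zero
      omega

lemma TQ_TQ_one (h8 : Fintype.card F % 8 = 1) (x : F → ZMod 2) : TQ (TQ x) = TQ x := by
  funext v
  calc TQ (TQ x) v = ∑ s ∈ Qs F, ∑ t ∈ Qs F, x (v + s + t) := rfl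
    _ = ∑ u : F, ((((Qs F) ×ˢ (Qs F)).filter fun p => p.1 + p.2 = u).card : ZMod 2) * x (v + u) :=
        double_sum_eq _ _ x v
    _ = ∑ u : F, (if u ∈ Qs F then 1 else 0) * x (v + u) := by
        exact Finset.sum_congr rfl fun u _ => by rw [coeffQQ_one hq h8 u]
    _ = ∑ u ∈ Qs F, x (v + u) := by
        simp only [ite_mul, one_mul, zero_mul]
        rw [Finset.sum_ite_mem, Finset.univ_inter]
    _ = TQ x v := rfl

lemma TQ_TN_one (h8 : Fintype.card F % 8 = 1) (x : F → ZMod 2) : TQ (TN x) = 0 := by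
  funext v
  calc TQ (TN x) v = ∑ s ∈ Qs F, ∑ t ∈ Ns F, x (v + s + t) := rfl
    _ = ∑ u : F, ((((Qs F) ×ˢ (Ns F)).filter fun p => p.1 + p.2 = u).card : ZMod 2) * x (v + u) :=
        double_sum_eq _ _ x v
    _ = 0 := by
        rw [Finset.sum_eq_zero]
        intro u _
        rw [coeffQN_one hq h8 u, zero_mul]

lemma TQ_TQ_five (h5 : Fintype.card F % 8 = 5) (x : F → ZMod 2) : TQ (TQ x) = TN x := by
  funext v
  calc TQ (TQ x) v = ∑ s ∈ Qs F, ∑ t ∈ Qs F, x (v + s + t) := rfl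
    _ = ∑ u : F, ((((Qs F) ×ˢ (Qs F)).filter fun p => p.1 + p.2 = u).card : ZMod 2) * x (v + u) :=
        double_sum_eq _ _ x v
    _ = ∑ u : F, (if u ∈ Ns F then 1 else 0) * x (v + u) := by
        exact Finset.sum_congr rfl fun u _ => by rw [coeffQQ_five hq h5 u]
    _ = ∑ u ∈ Ns F, x (v + u) := by
        simp only [ite_mul, one_mul, zero_mul]
        rw [Finset.sum_ite_mem, Finset.univ_inter]
    _ = TN x v := rfl

lemma TQ_const_one : TQ (fun _ : F => (1 : ZMod 2)) = 0 := by
  funext v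
  calc TQ (fun _ : F => (1 : ZMod 2)) v = ∑ _s ∈ Qs F, (1 : ZMod 2) := rfl
    _ = ((Qs F).card : ZMod 2) := by rw [Finset.sum_const, nsmul_eq_mul, mul_one]
    _ = 0 := natCast_zmod2_zero (cardQs_even hq)

omit hq in
lemma sum_QN (x : F → ZMod 2) (v : F) : TQ x v + TN x v + x v = ES x := by
  have h1 : TQ x v + TN x v = ∑ s ∈ Qs F ∪ Ns F, x (v + s) := (Finset.sum_union QsNs_disjoint).symm
  rw [h1, QsNs_union]
  have h2 : ∑ s ∈ univ \ {(0:F)}, x (v + s) + x (v + 0) = ∑ s : F, x (v + s) := by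
    rw [Finset.sum_eq_sum_sdiff_singleton_add (Finset.mem_univ (0:F)) (fun s => x (v + s))]
  rw [add_zero] at h2
  rw [h2]
  rw [ES_apply]
  exact Equiv.sum_comp (Equiv.addLeft v) x

lemma ES_TQ (x : F → ZMod 2) : ES (TQ x) = 0 := by
  have : ES (TQ x) = ∑ v : F, ∑ s ∈ Qs F, x (v + s) := rfl
  rw [this, Finset.sum_comm]
  have h1 : ∀ s ∈ Qs F, ∑ v : F, x (v + s) = ES x := by
    intro s _
    rw [ES_apply]
    exact Equiv.sum_comp (Equiv.addRight s) x
  rw [Finset.sum_congr rfl h1, Finset.sum_const, nsmul_eq_mul,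
    natCast_zmod2_zero (cardQs_even hq), zero_mul]

lemma ES_TN (x : F → ZMod 2) : ES (TN x) = 0 := by
  have : ES (TN x) = ∑ v : F, ∑ s ∈ Ns F, x (v + s) := rfl
  rw [this, Finset.sum_comm]
  have h1 : ∀ s ∈ Ns F, ∑ v : F, x (v + s) = ES x := by
    intro s _
    rw [ES_apply]
    exact Equiv.sum_comp (Equiv.addRight s) x
  rw [Finset.sum_congr rfl h1, Finset.sum_const, nsmul_eq_mul,
    natCast_zmod2_zero (cardNs_even hq), zero_mul]

end Coeffs

section Counting
open Finset
variable {F : Type*} [Field F] [Fintype F] [DecidableEq F]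

lemma card_hom_eq {A B : Type*} [AddCommGroup A] [AddCommGroup B] (f : A →+ B) :
    Nat.card A = Nat.card f.range * Nat.card f.ker := by
  rw [AddSubgroup.card_eq_card_quotient_mul_card_addSubgroup f.ker]
  congr 1
  exact Nat.card_congr (QuotientAddGroup.quotientKerEquivRange f).toEquiv

lemma card_V : Nat.card (F → ZMod 2) = 2 ^ Fintype.card F := by
  rw [Nat.card_eq_fintype_card, Fintype.card_fun]
  simp

lemma ES_surjective : Function.Surjective (ES (F := F)) := by
  intro c
  rcases zmod2_cases c with rfl | rfl
  · exact ⟨0, map_zero _⟩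
  · refine ⟨fun v => if v = 0 then 1 else 0, ?_⟩
    rw [ES_apply, Finset.sum_ite_eq' univ (0:F) (fun _ => (1:ZMod 2))]
    simp

lemma card_kerES : Nat.card (ES (F := F)).ker = 2 ^ (Fintype.card F - 1) := by
  have h := card_hom_eq (ES (F := F))
  have hr : (ES (F := F)).range = ⊤ := AddMonoidHom.range_eq_top_of_surjective _ ES_surjective
  rw [hr] at h
  have htop : Nat.card (⊤ : AddSubgroup (ZMod 2)) = 2 := by
    rw [Nat.card_congr AddSubgroup.topEquiv.toEquiv, Nat.card_eq_fintype_card]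
    rfl
  rw [htop, card_V] at h
  have hpos : 0 < Fintype.card F := Fintype.card_pos
  have h2 : 2 ^ Fintype.card F = 2 * 2 ^ (Fintype.card F - 1) := by
    rw [← pow_succ']
    congr 1
    omega
  rw [h2] at h
  exact (Nat.eq_of_mul_eq_mul_left two_pos h.symm)

variable (hq : Fintype.card F % 4 = 1)
include hq

/-- Case q ≡ 5 mod 8 : the kernel is {0, 1}. -/
lemma card_ker_five (h5 : Fintype.card F % 8 = 5) :
    Nat.card {x : F → ZMod 2 // TQ x = 0} = 2 := by
  have hchar : ∀ x : F → ZMod 2, TQ x = 0 ↔ (x = 0 ∨ x = fun _ => 1) := by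
    intro x
    constructor
    · intro hx
      have h2 : TN x = 0 := by rw [← TQ_TQ_five hq h5 x, hx, map_zero]
      have h3 : ∀ v, x v = ES x := by
        intro v
        have hs := sum_QN x v
        rw [congrFun hx v, congrFun h2 v] at hs
        simpa using hs
      rcases zmod2_cases (ES x) with h | h
      · left; funext v; rw [h3 v, h]; rfl
      · right; funext v; rw [h3 v, h]
    · rintro (rfl | rfl)
      · exact map_zero _
      · exact TQ_const_one hq
  have hset : {x : F → ZMod 2 | TQ x = 0} = {0, fun _ => 1} := by
    ext x
    simp only [Set.mem_setOf_eq, Set.mem_insert_iff, Set.mem_singleton_iff]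
    exact hchar x
  calc Nat.card {x : F → ZMod 2 // TQ x = 0}
      = Nat.card {x : F → ZMod 2 | TQ x = 0} := rfl
    _ = ({0, fun _ => 1} : Set (F → ZMod 2)).ncard := by
        rw [hset, Nat.card_coe_set_eq]
    _ = 2 := Set.ncard_pair (by
        intro h
        have h0 := congrFun h 0
        simp only [Pi.zero_apply] at h0
        exact absurd h0.symm one_ne_zero)

lemma exists_nonsquare' : ∃ n : F, quadraticChar F n = -1 ∧ n ≠ 0 := by
  obtain ⟨n, hn⟩ := FiniteField.exists_nonsquare (ringChar_ne_two' hq)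
  have h0 : n ≠ 0 := fun h => hn (by rw [h]; exact ⟨0, by ring⟩)
  exact ⟨n, quadraticChar_neg_one_iff_not_isSquare.mpr hn, h0⟩

omit hq in
lemma sum_Ns_reindex {n : F} (hn : quadraticChar F n = -1) (h0 : n ≠ 0) (f : F → ZMod 2) :
    ∑ t ∈ Ns F, f t = ∑ s ∈ Qs F, f (n * s) := by
  have hinv : quadraticChar F n⁻¹ = -1 := by
    have h1 : quadraticChar F n⁻¹ * quadraticChar F n = 1 := by
      rw [← map_mul, inv_mul_cancel₀ h0, map_one]
    rw [hn] at h1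
    omega
  apply Finset.sum_nbij' (fun t => n⁻¹ * t) (fun s => n * s)
  · intro t ht
    rw [mem_Ns] at ht
    rw [mem_Qs, map_mul, hinv, ht]
    norm_num
  · intro s hs
    rw [mem_Qs] at hs
    rw [mem_Ns, map_mul, hn, hs]
    norm_num
  · intro t _
    rw [mul_inv_cancel_left₀ h0]
  · intro s _
    rw [inv_mul_cancel_left₀ h0]
  · intro t _
    rw [mul_inv_cancel_left₀ h0]

omit hq in
lemma TN_sigma {n : F} (hn : quadraticChar F n = -1) (h0 : n ≠ 0) (x : F → ZMod 2) :
    TN (fun v => x (n⁻¹ * v)) = fun v => TQ x (n⁻¹ * v) := by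
  funext v
  rw [TN_apply]
  rw [sum_Ns_reindex hn h0 (fun t => x (n⁻¹ * (v + t)))]
  rw [TQ_apply]
  apply Finset.sum_congr rfl
  intro s _
  congr 1
  rw [mul_add, inv_mul_cancel_left₀ h0]

omit hq in
lemma TQ_sigma' {n : F} (hn : quadraticChar F n = -1) (h0 : n ≠ 0) (x : F → ZMod 2) :
    TQ (fun v => x (n * v)) = fun v => TN x (n * v) := by
  funext v
  rw [TQ_apply, TN_apply]
  rw [sum_Ns_reindex hn h0 (fun t => x (n * v + t))]
  apply Finset.sum_congr rfl
  intro s _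
  congr 1
  ring

lemma card_range_eq : Nat.card (TQ (F:=F)).range = Nat.card (TN (F:=F)).range := by
  obtain ⟨n, hn, h0⟩ := exists_nonsquare' hq
  apply Nat.card_congr
  refine
    { toFun := fun z => ⟨fun v => (z : F → ZMod 2) (n⁻¹ * v), ?_⟩
      invFun := fun w => ⟨fun v => (w : F → ZMod 2) (n * v), ?_⟩
      left_inv := ?_
      right_inv := ?_ }
  · obtain ⟨x, hx⟩ := z.2
    apply AddMonoidHom.mem_range.mpr
    refine ⟨fun v => x (n⁻¹ * v), ?_⟩
    rw [TN_sigma hn h0 x, hx]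
  · obtain ⟨y, hy⟩ := w.2
    apply AddMonoidHom.mem_range.mpr
    refine ⟨fun v => y (n * v), ?_⟩
    rw [TQ_sigma' hn h0 y, hy]
  · intro z
    apply Subtype.ext
    funext v
    show (z : F → ZMod 2) (n⁻¹ * (n * v)) = (z : F → ZMod 2) v
    rw [inv_mul_cancel_left₀ h0]
  · intro w
    apply Subtype.ext
    funext v
    show (w : F → ZMod 2) (n * (n⁻¹ * v)) = (w : F → ZMod 2) v
    rw [mul_inv_cancel_left₀ h0]

lemma range_inter_zero (h8 : Fintype.card F % 8 = 1) {z : F → ZMod 2}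
    (h1 : z ∈ (TQ (F:=F)).range) (h2 : z ∈ (TN (F:=F)).range) : z = 0 := by
  obtain ⟨r, hr⟩ := h1
  obtain ⟨s, hs⟩ := h2
  have e1 : TQ z = z := by rw [← hr, TQ_TQ_one hq h8]
  have e2 : TQ z = 0 := by rw [← hs, TQ_TN_one hq h8]
  rw [← e1, e2]

lemma card_range_sq (h8 : Fintype.card F % 8 = 1) :
    Nat.card (TQ (F:=F)).range * Nat.card (TN (F:=F)).range = 2 ^ (Fintype.card F - 1) := by
  rw [← Nat.card_prod, ← card_kerES (F:=F)]
  have hmem : ∀ p : (TQ (F:=F)).range × (TN (F:=F)).range,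
      (p.1 : F → ZMod 2) + (p.2 : F → ZMod 2) ∈ (ES (F:=F)).ker := by
    rintro ⟨⟨z1, r, hr⟩, ⟨z2, s, hs⟩⟩
    rw [AddMonoidHom.mem_ker, map_add]
    show ES z1 + ES z2 = 0
    rw [← hr, ← hs, ES_TQ hq, ES_TN hq, add_zero]
  apply Nat.card_eq_of_bijective (fun p => ⟨(p.1 : F → ZMod 2) + (p.2 : F → ZMod 2), hmem p⟩)
  constructor
  · rintro p p' hpp
    have h : (p.1 : F → ZMod 2) + (p.2 : F → ZMod 2) = (p'.1 : F → ZMod 2) + (p'.2 : F → ZMod 2) :=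
      congrArg Subtype.val hpp
    have hd : (p.1 : F → ZMod 2) - (p'.1 : F → ZMod 2)
        = (p'.2 : F → ZMod 2) - (p.2 : F → ZMod 2) := by
      have := h
      abel_nf
      linear_combination (norm := abel_nf) h
    have hz : (p.1 : F → ZMod 2) - (p'.1 : F → ZMod 2) = 0 :=
      range_inter_zero hq h8 (sub_mem p.1.2 p'.1.2) (by rw [hd]; exact sub_mem p'.2.2 p.2.2)
    have h1 : (p.1 : F → ZMod 2) = (p'.1 : F → ZMod 2) := sub_eq_zero.mp hz
    have h2 : (p.2 : F → ZMod 2) = (p'.2 : F → ZMod 2) := by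
      have := h
      rw [h1] at this
      exact add_left_cancel this
    exact Prod.ext (Subtype.ext h1) (Subtype.ext h2)
  · rintro ⟨x, hx⟩
    rw [AddMonoidHom.mem_ker] at hx
    refine ⟨(⟨TQ x, AddMonoidHom.mem_range.mpr ⟨x, rfl⟩⟩,
             ⟨TN x, AddMonoidHom.mem_range.mpr ⟨x, rfl⟩⟩), ?_⟩
    apply Subtype.ext
    show TQ x + TN x = x
    funext v
    have hs := sum_QN x v
    rw [hx] at hs
    have hself : x v + x v = 0 := by
      rcases zmod2_cases (x v) with h | h <;> rw [h] <;> rfl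
    calc (TQ x + TN x) v = TQ x v + TN x v := rfl
      _ = TQ x v + TN x v + (x v + x v) := by rw [hself, add_zero]
      _ = (TQ x v + TN x v + x v) + x v := by ring
      _ = 0 + x v := by rw [hs]
      _ = x v := zero_add _

lemma card_ker_one (h8 : Fintype.card F % 8 = 1) :
    Nat.card {x : F → ZMod 2 // TQ x = 0} = 2 ^ ((Fintype.card F + 1) / 2) := by
  have hpos : 0 < Fintype.card F := Fintype.card_pos
  have hrr : Nat.card (TQ (F:=F)).range = 2 ^ ((Fintype.card F - 1) / 2) := by
    have h1 := card_range_sq hq h8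
    rw [← card_range_eq hq] at h1
    have hsq : Nat.card (TQ (F:=F)).range ^ 2 = (2 ^ ((Fintype.card F - 1) / 2)) ^ 2 := by
      rw [pow_two, h1, ← pow_mul]
      congr 1
      omega
    exact Nat.pow_left_injective (by norm_num) hsq
  have hk := card_hom_eq (TQ (F:=F))
  rw [card_V, hrr] at hk
  have h3 : (2:ℕ) ^ Fintype.card F
      = 2 ^ ((Fintype.card F - 1) / 2) * 2 ^ ((Fintype.card F + 1) / 2) := by
    rw [← pow_add]
    congr 1
    omega
  rw [h3] at hk
  have hcancel : Nat.card (TQ (F:=F)).ker = 2 ^ ((Fintype.card F + 1) / 2) :=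
    (Nat.eq_of_mul_eq_mul_left (pow_pos two_pos _) hk.symm)
  rw [← hcancel]
  exact Nat.card_congr (Equiv.subtypeEquivRight (fun x => AddMonoidHom.mem_ker.symm))

end Counting

/-- The Paley graph on a finite field `F`: `x ~ y` iff `x ≠ y` and `x - y` is a square
(for `|F| ≡ 1 (mod 4)` the relation `IsSquare (x - y)` is already symmetric). -/
def paleyGraph (F : Type*) [Field F] : SimpleGraph F :=
  SimpleGraph.fromRel (fun x y => IsSquare (x - y))

section Main
open Finset
variable {F : Type*} [Field F] [Fintype F] [DecidableEq F]
variable (hq : Fintype.card F % 4 = 1)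
include hq

lemma neg_one_square : IsSquare (-1 : F) := by
  rw [← quadraticChar_one_iff_isSquare (neg_ne_zero.mpr (one_ne_zero : (1:F) ≠ 0))]
  exact chi_neg_one hq

lemma mem_neighbor (v u : F) : u ∈ (paleyGraph F).neighborSet v ↔ u - v ∈ Qs F := by
  have hs := neg_one_square hq
  simp only [SimpleGraph.mem_neighborSet, paleyGraph, SimpleGraph.fromRel_adj]
  rw [mem_Qs]
  constructor
  · rintro ⟨hne, h | h⟩
    · have h2 : IsSquare (u - v) := by
        have h3 := IsSquare.mul hs h
        have h4 : (-1 : F) * (v - u) = u - v := by ring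
        rwa [h4] at h3
      rw [quadraticChar_one_iff_isSquare (sub_ne_zero_of_ne (Ne.symm hne))]
      exact h2
    · rw [quadraticChar_one_iff_isSquare (sub_ne_zero_of_ne (Ne.symm hne))]
      exact h
  · intro h
    have hne : u - v ≠ 0 := by
      intro h0; rw [h0, quadraticChar_zero] at h; norm_num at h
    have hsq : IsSquare (u - v) := (quadraticChar_one_iff_isSquare hne).mp h
    exact ⟨fun he => hne (by rw [he, sub_self]), Or.inr hsq⟩

lemma inter_eq_image (S : Set F) [DecidablePred (· ∈ S)] (v : F) :
    S ∩ (paleyGraph F).neighborSet v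
      = ↑(((Qs F).filter fun s => v + s ∈ S).image (fun s => v + s)) := by
  ext u
  simp only [Set.mem_inter_iff, Finset.coe_image, Set.mem_image, Finset.mem_coe,
    Finset.mem_filter]
  constructor
  · rintro ⟨hS, hN⟩
    refine ⟨u - v, ⟨(mem_neighbor hq v u).mp hN, ?_⟩, by ring⟩
    rw [show v + (u - v) = u by ring]
    exact hS
  · rintro ⟨s, ⟨hsQ, hsS⟩, rfl⟩
    refine ⟨hsS, (mem_neighbor hq v _).mpr ?_⟩
    rw [show v + s - v = s by ring]
    exact hsQ

lemma ncard_inter (S : Set F) [DecidablePred (· ∈ S)] (v : F) :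
    (S ∩ (paleyGraph F).neighborSet v).ncard = ((Qs F).filter fun s => v + s ∈ S).card := by
  rw [inter_eq_image hq S v, Set.ncard_coe_finset,
    Finset.card_image_of_injective _ (add_right_injective v)]

lemma ncard_nbr (v : F) : ((paleyGraph F).neighborSet v).ncard = (Qs F).card := by
  classical
  have h := ncard_inter hq (Set.univ : Set F) v
  simpa using h

lemma even_iff_compl (S : Set F) (v : F) :
    Even ((S ∩ (paleyGraph F).neighborSet v).ncard)
      ↔ Even ((Sᶜ ∩ (paleyGraph F).neighborSet v).ncard) := by
  set N := (paleyGraph F).neighborSet v with hNdef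
  have hU : (S ∩ N) ∪ (Sᶜ ∩ N) = N := by
    ext u; by_cases h : u ∈ S <;> simp [h]
  have hd : Disjoint (S ∩ N) (Sᶜ ∩ N) := by
    rw [Set.disjoint_left]
    rintro u ⟨h1, -⟩ ⟨h2, -⟩
    exact h2 h1
  have hadd : (S ∩ N).ncard + (Sᶜ ∩ N).ncard = (Qs F).card := by
    rw [← Set.ncard_union_eq hd (Set.toFinite _) (Set.toFinite _), hU, hNdef, ncard_nbr hq]
  have heven := cardQs_even hq
  rw [Nat.even_iff, Nat.even_iff]
  omega

lemma bridge (x : F → ZMod 2) :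
    TQ x = 0 ↔
      ((∀ v ∈ {w | x w = 1}, Even (({w | x w = 1} ∩ (paleyGraph F).neighborSet v).ncard)) ∧
       (∀ v ∈ {w | x w = 1}ᶜ, Even (({w | x w = 1}ᶜ ∩ (paleyGraph F).neighborSet v).ncard))) := by
  set S : Set F := {w | x w = 1} with hS
  haveI hdec : DecidablePred (· ∈ S) := fun w => decidable_of_iff (x w = 1) (by simp [hS])
  have key : ∀ v, (TQ x v = 0 ↔ Even ((S ∩ (paleyGraph F).neighborSet v).ncard)) := by
    intro v
    rw [TQ_apply]
    have hx : ∀ s, x (v + s) = if v + s ∈ S then 1 else 0 := by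
      intro s
      rcases zmod2_cases (x (v + s)) with h | h
      · rw [h, if_neg]
        simp only [hS, Set.mem_setOf_eq, h]
        decide
      · rw [h, if_pos]
        simp only [hS, Set.mem_setOf_eq, h]
    rw [Finset.sum_congr rfl (fun s _ => hx s), Finset.sum_boole]
    rw [ncard_inter hq S v]
    constructor
    · intro h
      rw [Nat.even_iff]
      by_contra hodd
      have h1 : (((Qs F).filter fun s => v + s ∈ S).card : ZMod 2) = 1 :=
        natCast_zmod2_one (by omega)
      rw [h1] at h
      exact one_ne_zero h
    · intro h
      exact natCast_zmod2_zero (Nat.even_iff.mp h)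
  constructor
  · intro h0
    constructor
    · intro v _
      exact (key v).mp (congrFun h0 v)
    · intro v _
      exact (even_iff_compl hq S v).mp ((key v).mp (congrFun h0 v))
  · rintro ⟨h1, h2⟩
    funext v
    show TQ x v = 0
    by_cases hv : v ∈ S
    · exact (key v).mpr (h1 v hv)
    · exact (key v).mpr ((even_iff_compl hq S v).mpr (h2 v hv))

omit hq in
/-- indicator equivalence -/
noncomputable def indEquiv : Set F ≃ (F → ZMod 2) := by
  classical
  exact
  { toFun := fun S v => if v ∈ S then 1 else 0
    invFun := fun x => {v | x v = 1}
    left_inv := fun S => by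
      ext v
      simp only [Set.mem_setOf_eq]
      by_cases h : v ∈ S <;> simp [h]
    right_inv := fun x => by
      funext v
      simp only [Set.mem_setOf_eq]
      rcases zmod2_cases (x v) with h | h <;> simp [h] }

end Main

/-- for a prime power `q ≡ 1 (mod 4)`, the number of subsets `V₁ ⊆ 𝔽_q` such
that both `P_q[V₁]` and `P_q[V₁ᶜ]` have all degrees even is `2 ^ ((q+1)/2)` if
`q ≡ 1 (mod 8)` and `2` if `q ≡ 5 (mod 8)`. -/
theorem stmt_7 {F : Type*} [Field F] [Fintype F] [DecidableEq F]
    (hq : Fintype.card F % 4 = 1) :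
    (Fintype.card F % 8 = 1 →
      Nat.card {S : Set F //
          (∀ v ∈ S, Even ((S ∩ (paleyGraph F).neighborSet v).ncard)) ∧
          (∀ v ∈ Sᶜ, Even ((Sᶜ ∩ (paleyGraph F).neighborSet v).ncard))} =
        2 ^ ((Fintype.card F + 1) / 2)) ∧
    (Fintype.card F % 8 = 5 →
      Nat.card {S : Set F //
          (∀ v ∈ S, Even ((S ∩ (paleyGraph F).neighborSet v).ncard)) ∧
          (∀ v ∈ Sᶜ, Even ((Sᶜ ∩ (paleyGraph F).neighborSet v).ncard))} = 2) := by
  have e : {x : F → ZMod 2 // TQ x = 0} ≃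
      {S : Set F //
          (∀ v ∈ S, Even ((S ∩ (paleyGraph F).neighborSet v).ncard)) ∧
          (∀ v ∈ Sᶜ, Even ((Sᶜ ∩ (paleyGraph F).neighborSet v).ncard))} :=
    Equiv.subtypeEquiv (indEquiv (F := F)).symm (fun x => bridge hq x)
  constructor
  · intro h8
    rw [← Nat.card_congr e]
    exact card_ker_one hq h8
  · intro h5
    rw [← Nat.card_congr e]
    exact card_ker_five hq h5
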